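/- Let p be an odd prime and a ∈ ℤ_p with residue ⟨a⟩ ∈ {0,…,p−1}. If ⟨a⟩ is odd, then ∑_{k=0}^{p−1} C(2k,k)·C(a,k)·C(−1−a,k)/4^k ≡ 0 (mod p²). -/

import Mathlib

/-- Generalized binomial coefficient C(a,k) = a(a-1)...(a-k+1)/k!. -/
def gchoose (a : ℚ) (k : ℕ) : ℚ :=
  (∏ i ∈ Finset.range k, (a - i)) / (Nat.factorial k : ℚ)

/-- `x` is a `p`-adic integer: its reduced denominator is not divisible by `p`. -/
def IsPInt (p : ℕ) (x : ℚ) : Prop := ¬ p ∣ x.den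

/-- `x ≡ y (mod p^e)` for rationals: `(x - y)/p^e` is a `p`-adic integer. -/
def ModCong (p e : ℕ) (x y : ℚ) : Prop :=
  ∃ z : ℚ, ¬ p ∣ z.den ∧ x - y = (p : ℚ) ^ e * z

/-- The Legendre polynomial `P_n(x) = ∑_{k=0}^n C(n,k) C(n+k,k) ((x-1)/2)^k`. -/
noncomputable def legendre (n : ℕ) : Polynomial ℚ :=
  ∑ k ∈ Finset.range (n + 1),
    Polynomial.C ((n.choose k : ℚ) * ((n + k).choose k)) *
      (Polynomial.C (1/2 : ℚ) * (Polynomial.X - 1)) ^ k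

namespace Aux

variable {p : ℕ}

lemma isPInt_intCast (hp : p.Prime) (n : ℤ) : IsPInt p (n : ℚ) := by
  rw [IsPInt, Rat.den_intCast, Nat.dvd_one]
  exact hp.one_lt.ne'

lemma isPInt_natCast (hp : p.Prime) (n : ℕ) : IsPInt p (n : ℚ) := by
  simpa using isPInt_intCast hp (n : ℤ)

lemma pint_add (hp : p.Prime) {x y : ℚ} (hx : IsPInt p x) (hy : IsPInt p y) :
    IsPInt p (x + y) := by
  intro h
  rcases (Nat.Prime.dvd_mul hp).1 (h.trans (Rat.add_den_dvd x y)) with h' | h'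
  exacts [hx h', hy h']

lemma pint_mul (hp : p.Prime) {x y : ℚ} (hx : IsPInt p x) (hy : IsPInt p y) :
    IsPInt p (x * y) := by
  intro h
  rcases (Nat.Prime.dvd_mul hp).1 (h.trans (Rat.mul_den_dvd x y)) with h' | h'
  exacts [hx h', hy h']

lemma pint_neg {x : ℚ} (hx : IsPInt p x) : IsPInt p (-x) := by
  simpa [IsPInt, Rat.neg_den] using hx

lemma pint_sub (hp : p.Prime) {x y : ℚ} (hx : IsPInt p x) (hy : IsPInt p y) :
    IsPInt p (x - y) := by
  simpa [sub_eq_add_neg] using pint_add hp hx (pint_neg hy)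

lemma isPInt_one (hp : p.Prime) : IsPInt p 1 := by
  simpa using isPInt_natCast hp 1

lemma isPInt_zero (hp : p.Prime) : IsPInt p 0 := by
  simpa using isPInt_natCast hp 0

lemma isPInt_sum (hp : p.Prime) {s : Finset ℕ} {f : ℕ → ℚ}
    (h : ∀ i ∈ s, IsPInt p (f i)) : IsPInt p (∑ i ∈ s, f i) := by
  classical
  induction s using Finset.induction_on with
  | empty => simpa using isPInt_zero hp
  | @insert _ _ hns ih =>
      rw [Finset.sum_insert hns]
      exact pint_add hp (h _ (Finset.mem_insert_self _ _))
        (ih fun i hi => h i (Finset.mem_insert_of_mem hi))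

lemma isPInt_prod (hp : p.Prime) {s : Finset ℕ} {f : ℕ → ℚ}
    (h : ∀ i ∈ s, IsPInt p (f i)) : IsPInt p (∏ i ∈ s, f i) := by
  classical
  induction s using Finset.induction_on with
  | empty => simpa using isPInt_one hp
  | @insert _ _ hns ih =>
      rw [Finset.prod_insert hns]
      exact pint_mul hp (h _ (Finset.mem_insert_self _ _))
        (ih fun i hi => h i (Finset.mem_insert_of_mem hi))

/-- p-integrality from a fraction representation with denominator prime to p. -/
lemma isPInt_div (hp : p.Prime) (n d : ℤ) (hd : ¬ (p : ℤ) ∣ d) :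
    IsPInt p ((n : ℚ) / (d : ℚ)) := by
  intro h
  have := Rat.den_dvd n d
  rw [Rat.divInt_eq_div] at this
  exact hd (dvd_trans (Int.natCast_dvd_natCast.2 h) this)

end Aux

namespace Aux2



/-- `e i = i(i+1)` as a rational. -/
def e (i : ℕ) : ℚ := (i : ℚ) * ((i : ℚ) + 1)

/-- `c_k = C(2k,k)(-1)^k / (4^k k!^2)`. -/
def cc (k : ℕ) : ℚ := (((2*k).choose k : ℕ) : ℚ) * (-1)^k / (4^k * ((k.factorial : ℚ))^2)

/-- `π(x,k) = ∏_{i<k} (x - i(i+1))`. -/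
def pr (x : ℚ) (k : ℕ) : ℚ := ∏ i ∈ Finset.range k, (x - e i)

lemma pr_succ (x : ℚ) (k : ℕ) : pr x (k+1) = pr x k * (x - e k) :=
  Finset.prod_range_succ _ _

lemma pr_e_split (m k : ℕ) :
    pr (e m) k = (∏ i ∈ Finset.range k, ((m:ℚ) - i)) * (∏ i ∈ Finset.range k, ((m:ℚ) + 1 + i)) := by
  rw [pr, ← Finset.prod_mul_distrib]
  refine Finset.prod_congr rfl fun i _ => ?_
  unfold e; push_cast; ring

lemma pr_e_zero (m k : ℕ) (h : m < k) : pr (e m) k = 0 := by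
  apply Finset.prod_eq_zero (Finset.mem_range.2 h)
  simp

lemma cc_succ (k : ℕ) : cc (k+1) = -(2*(k:ℚ)+1) / (2*((k:ℚ)+1)^3) * cc k := by
  have h := Nat.succ_mul_centralBinom_succ k
  have hq : ((k:ℚ)+1) * (((2*(k+1)).choose (k+1) : ℕ) : ℚ)
      = 2*(2*(k:ℚ)+1) * (((2*k).choose k : ℕ) : ℚ) := by
    exact_mod_cast congrArg (Nat.cast : ℕ → ℚ) h
  have hk : ((k:ℚ)+1) ≠ 0 := by positivity
  have hCB : (((2*(k+1)).choose (k+1) : ℕ) : ℚ)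
      = 2*(2*(k:ℚ)+1) * (((2*k).choose k : ℕ) : ℚ) / ((k:ℚ)+1) := by
    rw [eq_div_iff hk]; linear_combination hq
  have hf : ((k.factorial : ℕ) : ℚ) ≠ 0 := by exact_mod_cast k.factorial_ne_zero
  have h4 : (4:ℚ)^k ≠ 0 := by positivity
  unfold cc
  rw [hCB, Nat.factorial_succ]
  push_cast
  field_simp
  ring

lemma peel_front_sub (ν : ℚ) (k : ℕ) :
    ∏ i ∈ Finset.range (k+2), (ν + 2 - i) =
      (ν+2) * (ν+1) * ∏ i ∈ Finset.range k, (ν - i) := by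
  rw [Finset.prod_range_succ', Finset.prod_range_succ']
  rw [Finset.prod_congr rfl (fun i _ =>
    (by push_cast; ring : ν + 2 - ((i+1+1:ℕ):ℚ) = ν - i))]
  push_cast; ring

lemma peel_front_add (ν : ℚ) (k : ℕ) :
    ∏ i ∈ Finset.range (k+2), (ν + 1 + i) =
      (ν+1) * (ν+2) * ∏ i ∈ Finset.range k, (ν + 3 + i) := by
  rw [Finset.prod_range_succ', Finset.prod_range_succ']
  rw [Finset.prod_congr rfl (fun i _ =>
    (by push_cast; ring : ν + 1 + ((i+1+1:ℕ):ℚ) = ν + 3 + i))]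
  push_cast; ring

def tt (m k : ℕ) : ℚ := cc k * pr (e m) k

def GG (m : ℕ) : ℕ → ℚ
  | 0 => 0
  | 1 => 2*(m:ℚ)+3
  | (k+2) => -2*((k:ℚ)+2)^3*(2*(m:ℚ)+3)*cc (k+2)
      * (∏ i ∈ Finset.range k, ((m:ℚ) - i))
      * (∏ i ∈ Finset.range (k+2), ((m:ℚ)+1+(i:ℚ)))


lemma cc_zero : cc 0 = 1 := by simp [cc]

lemma cc_one : cc 1 = -1/2 := by
  have h : (2*1).choose 1 = 2 := by decide
  simp [cc, h, Nat.factorial]; norm_num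

lemma cc_two : cc 2 = 3/32 := by
  have h : (2*2).choose 2 = 6 := by decide
  simp [cc, h, Nat.factorial]; norm_num

lemma tele (m k : ℕ) :
    ((m:ℚ)+2)^2 * tt (m+2) k - ((m:ℚ)+1)^2 * tt m k = GG m (k+1) - GG m k := by
  match k with
  | 0 =>
      show _ = GG m 1 - GG m 0
      simp only [GG, tt, pr, Finset.range_zero, Finset.prod_empty]
      norm_num [cc]
      push_cast; ring
  | 1 =>
      show _ = GG m 2 - GG m 1
      simp only [GG, tt, pr_e_split, Finset.prod_range_one,
        Finset.prod_range_succ, Finset.prod_range_zero]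
      norm_num [cc_one, cc_two]
      push_cast; ring
  | (k+2) =>
      show _ = GG m (k+3) - GG m (k+2)
      have hk3 : ((k:ℚ)+3) ≠ 0 := by positivity
      have h1 : (∏ i ∈ Finset.range (k+2), (((m+2:ℕ):ℚ) - (i:ℚ)))
          = ((m:ℚ)+2)*((m:ℚ)+1)*(∏ i ∈ Finset.range k, ((m:ℚ) - (i:ℚ))) := by
        have hc : (∏ i ∈ Finset.range (k+2), (((m+2:ℕ):ℚ) - (i:ℚ)))
            = ∏ i ∈ Finset.range (k+2), ((m:ℚ) + 2 - (i:ℚ)) :=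
          Finset.prod_congr rfl fun (i : ℕ) _ => by push_cast; ring
        rw [hc]; exact peel_front_sub (m:ℚ) k
      have h2 : (∏ i ∈ Finset.range (k+2), (((m+2:ℕ):ℚ) + 1 + (i:ℚ)))
          = (∏ i ∈ Finset.range k, ((m:ℚ) + 3 + (i:ℚ)))*((m:ℚ)+3+(k:ℚ))*((m:ℚ)+4+(k:ℚ)) := by
        rw [Finset.prod_range_succ, Finset.prod_range_succ]
        have hc : (∏ i ∈ Finset.range k, (((m+2:ℕ):ℚ) + 1 + (i:ℚ)))
            = ∏ i ∈ Finset.range k, ((m:ℚ) + 3 + (i:ℚ)) :=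
          Finset.prod_congr rfl fun (i : ℕ) _ => by push_cast; ring
        rw [hc]; push_cast; ring
      have h3 : (∏ i ∈ Finset.range (k+2), ((m:ℚ) - (i:ℚ)))
          = (∏ i ∈ Finset.range k, ((m:ℚ) - (i:ℚ)))*((m:ℚ)-(k:ℚ))*((m:ℚ)-(k:ℚ)-1) := by
        rw [Finset.prod_range_succ, Finset.prod_range_succ]
        push_cast; ring
      have h4 : (∏ i ∈ Finset.range (k+2), ((m:ℚ) + 1 + (i:ℚ)))
          = ((m:ℚ)+1)*((m:ℚ)+2)*(∏ i ∈ Finset.range k, ((m:ℚ) + 3 + (i:ℚ))) :=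
        peel_front_add (m:ℚ) k
      have h5 : (∏ i ∈ Finset.range (k+1), ((m:ℚ) - (i:ℚ)))
          = (∏ i ∈ Finset.range k, ((m:ℚ) - (i:ℚ)))*((m:ℚ)-(k:ℚ)) := by
        rw [Finset.prod_range_succ]
      have h6 : (∏ i ∈ Finset.range (k+3), ((m:ℚ) + 1 + (i:ℚ)))
          = ((m:ℚ)+1)*((m:ℚ)+2)*(∏ i ∈ Finset.range k, ((m:ℚ) + 3 + (i:ℚ)))*((m:ℚ)+3+(k:ℚ)) := by
        rw [Finset.prod_range_succ, h4]; push_cast; ring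
      have hG3 : GG m (k+3) = (2*(k:ℚ)+5)*(2*(m:ℚ)+3)*cc (k+2)
          * ((∏ i ∈ Finset.range k, ((m:ℚ) - (i:ℚ)))*((m:ℚ)-(k:ℚ)))
          * (((m:ℚ)+1)*((m:ℚ)+2)*(∏ i ∈ Finset.range k, ((m:ℚ) + 3 + (i:ℚ)))*((m:ℚ)+3+(k:ℚ))) := by
        show GG m ((k+1)+2) = _
        simp only [GG]
        rw [cc_succ (k+2), h5, h6]
        push_cast
        field_simp
        ring
      have hG2 : GG m (k+2) = -2*((k:ℚ)+2)^3*(2*(m:ℚ)+3)*cc (k+2)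
          * (∏ i ∈ Finset.range k, ((m:ℚ) - (i:ℚ)))
          * (((m:ℚ)+1)*((m:ℚ)+2)*(∏ i ∈ Finset.range k, ((m:ℚ) + 3 + (i:ℚ)))) := by
        simp only [GG]
        rw [h4]
      rw [hG3, hG2]
      simp only [tt, pr_e_split]
      rw [h1, h2, h3, h4]
      ring


def uu (m : ℕ) : ℚ := ∑ k ∈ Finset.range (m+1), tt m k

lemma sum_tt (m M : ℕ) (h : m + 1 ≤ M) : ∑ k ∈ Finset.range M, tt m k = uu m := by
  rw [uu]
  symm
  apply Finset.sum_subset (Finset.range_subset_range.2 h)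
  intro k _ hk
  have : m < k := by simpa using Finset.mem_range.not.1 hk
  simp [tt, pr_e_zero m k this]

lemma GG_top (m k : ℕ) (h : m < k) : GG m (k+2) = 0 := by
  simp only [GG]
  have : (∏ i ∈ Finset.range k, ((m:ℚ) - i)) = 0 := by
    apply Finset.prod_eq_zero (Finset.mem_range.2 h)
    simp
  rw [this]
  ring

lemma uu_rec (m : ℕ) : ((m:ℚ)+2)^2 * uu (m+2) = ((m:ℚ)+1)^2 * uu m := by
  have hsum := Finset.sum_congr rfl (fun k (_ : k ∈ Finset.range (m+4)) => tele m k)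
  rw [Finset.sum_sub_distrib, ← Finset.mul_sum, ← Finset.mul_sum] at hsum
  rw [Finset.sum_range_sub (GG m)] at hsum
  rw [sum_tt (m+2) (m+4) (by omega), sum_tt m (m+4) (by omega)] at hsum
  have h1 : GG m (m+4) = 0 := GG_top m (m+2) (by omega)
  have h2 : GG m 0 = 0 := rfl
  rw [h1, h2] at hsum
  linarith [hsum]

lemma uu_one : uu 1 = 0 := by
  have h1 : pr (e 1) 1 = 2 := by
    simp [pr, e, Finset.prod_range_one]
    norm_num
  simp [uu, tt, Finset.sum_range_succ, cc_zero, cc_one, pr, h1]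
  norm_num [e]

lemma uu_odd (m : ℕ) (h : Odd m) : uu m = 0 := by
  obtain ⟨d, rfl⟩ : ∃ d, m = 2*d+1 := by
    obtain ⟨d, hd⟩ := h; exact ⟨d, by omega⟩
  clear h
  induction d with
  | zero => exact uu_one
  | succ d ih =>
      have hrec := uu_rec (2*d+1)
      have h0 : uu (2*d+1) = 0 := ih
      rw [h0, mul_zero] at hrec
      have hne : (((2*d+1:ℕ):ℚ)+2)^2 ≠ 0 := by positivity
      have h23 : 2*d+1+2 = 2*(d+1)+1 := by omega
      rw [h23] at hrec
      exact (mul_eq_zero.1 hrec).resolve_left hne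

end Aux2

namespace Aux3
open Aux Aux2

/-- First divided difference of `pr`. -/
def hh (k : ℕ) (u v : ℚ) : ℚ :=
  ∑ j ∈ Finset.range k, pr u j * ∏ i ∈ Finset.Ico (j+1) k, (v - e i)

lemma hh_succ (k : ℕ) (u v : ℚ) :
    hh (k+1) u v = hh k u v * (v - e k) + pr u k := by
  rw [hh, Finset.sum_range_succ, Finset.Ico_self, Finset.prod_empty, mul_one]
  congr 1
  rw [hh, Finset.sum_mul]
  refine Finset.sum_congr rfl fun j hj => ?_
  have hj' : j + 1 ≤ k := Finset.mem_range.1 hj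
  rw [Finset.prod_Ico_succ_top hj', mul_assoc]

lemma pr_sub (k : ℕ) (u v : ℚ) : pr u k - pr v k = (u - v) * hh k u v := by
  induction k with
  | zero => simp [pr, hh]
  | succ k ih =>
      rw [pr_succ, pr_succ, hh_succ]
      linear_combination (v - e k) * ih

def Phi (N : ℕ) (x : ℚ) : ℚ := ∑ k ∈ Finset.range N, cc k * pr x k
def HH (N : ℕ) (u v : ℚ) : ℚ := ∑ k ∈ Finset.range N, cc k * hh k u v
def KK (N : ℕ) (u w v : ℚ) : ℚ :=
  ∑ k ∈ Finset.range N, cc k *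
    ∑ j ∈ Finset.range k, hh j u w * ∏ i ∈ Finset.Ico (j+1) k, (v - e i)

lemma Phi_sub (N : ℕ) (u v : ℚ) : Phi N u - Phi N v = (u - v) * HH N u v := by
  unfold Phi HH
  rw [← Finset.sum_sub_distrib, Finset.mul_sum]
  refine Finset.sum_congr rfl fun k _ => ?_
  linear_combination cc k * pr_sub k u v

lemma hh_fd (k : ℕ) (u w v : ℚ) :
    hh k u v - hh k w v
      = (u - w) * ∑ j ∈ Finset.range k, hh j u w * ∏ i ∈ Finset.Ico (j+1) k, (v - e i) := by
  have e1 : hh k u v = ∑ j ∈ Finset.range k, pr u j * ∏ i ∈ Finset.Ico (j+1) k, (v - e i) := rfl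
  have e2 : hh k w v = ∑ j ∈ Finset.range k, pr w j * ∏ i ∈ Finset.Ico (j+1) k, (v - e i) := rfl
  rw [e1, e2, ← Finset.sum_sub_distrib, Finset.mul_sum]
  refine Finset.sum_congr rfl fun j _ => ?_
  linear_combination (∏ i ∈ Finset.Ico (j+1) k, (v - e i)) * pr_sub j u w

lemma HH_sub (N : ℕ) (u w v : ℚ) : HH N u v - HH N w v = (u - w) * KK N u w v := by
  unfold HH KK
  rw [← Finset.sum_sub_distrib, Finset.mul_sum]
  refine Finset.sum_congr rfl fun k _ => ?_
  linear_combination cc k * hh_fd k u w v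

lemma Phi_e (N m : ℕ) (h : m + 1 ≤ N) : Phi N (e m) = uu m := by
  have h0 : Phi N (e m) = ∑ k ∈ Finset.range N, tt m k := rfl
  rw [h0, sum_tt m N h]

/-- `pr (ν(ν+1)) k` splits. -/
lemma pr_split (ν : ℚ) (k : ℕ) :
    pr (ν*(ν+1)) k
      = (∏ i ∈ Finset.range k, (ν - i)) * (∏ i ∈ Finset.range k, (ν + 1 + i)) := by
  rw [pr, ← Finset.prod_mul_distrib]
  refine Finset.prod_congr rfl fun i _ => ?_
  unfold e; push_cast; ring

lemma term_eq (a : ℚ) (k : ℕ) :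
    ((2 * k).choose k : ℚ) * gchoose a k * gchoose (-1 - a) k / 4 ^ k
      = cc k * pr (a*(a+1)) k := by
  have hneg : (∏ i ∈ Finset.range k, (-1 - a - (i:ℚ)))
      = (-1)^k * ∏ i ∈ Finset.range k, (a + 1 + (i:ℚ)) := by
    have hc : (∏ i ∈ Finset.range k, (-1 - a - (i:ℚ)))
        = ∏ i ∈ Finset.range k, ((-1) * (a + 1 + (i:ℚ))) :=
      Finset.prod_congr rfl fun (i : ℕ) _ => by ring
    rw [hc, Finset.prod_mul_distrib, Finset.prod_const, Finset.card_range]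
  have hf : ((k.factorial : ℕ) : ℚ) ≠ 0 := by exact_mod_cast k.factorial_ne_zero
  have h4 : (4:ℚ)^k ≠ 0 := by positivity
  rw [gchoose, gchoose, pr_split, cc, hneg]
  field_simp

-- p-integrality
variable {p : ℕ}

lemma isPInt_cc (hp : p.Prime) (hodd : Odd p) {k : ℕ} (hk : k < p) : IsPInt p (cc k) := by
  have hrepr : cc k = (((2*k).choose k * (-1)^k : ℤ) : ℚ)
      / (((4^k * (k.factorial)^2 : ℕ) : ℤ) : ℚ) := by
    rw [cc]; push_cast; ring
  rw [hrepr]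
  apply isPInt_div hp
  rw [Int.natCast_dvd_natCast]
  intro hdvd
  rcases (Nat.Prime.dvd_mul hp).1 hdvd with h | h
  · have h2 : p ∣ 2^(2*k) := by
      rw [show (4:ℕ) = 2^2 by norm_num, ← pow_mul] at h
      exact h
    have : p = 2 := (Nat.prime_dvd_prime_iff_eq hp Nat.prime_two).1 (hp.dvd_of_dvd_pow h2)
    rw [this] at hodd
    exact (by decide : ¬ Odd 2) hodd
  · have h1 : p ∣ k.factorial := hp.dvd_of_dvd_pow h
    have := (Nat.Prime.dvd_factorial hp).1 h1
    omega

lemma isPInt_e (hp : p.Prime) (i : ℕ) : IsPInt p (e i) :=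
  pint_mul hp (isPInt_natCast hp i) (pint_add hp (isPInt_natCast hp i) (isPInt_one hp))

lemma isPInt_pr (hp : p.Prime) {x : ℚ} (hx : IsPInt p x) (k : ℕ) : IsPInt p (pr x k) :=
  isPInt_prod hp fun i _ => pint_sub hp hx (isPInt_e hp i)

lemma isPInt_hh (hp : p.Prime) {u v : ℚ} (hu : IsPInt p u) (hv : IsPInt p v) (k : ℕ) :
    IsPInt p (hh k u v) :=
  isPInt_sum hp fun j _ => pint_mul hp (isPInt_pr hp hu j)
    (isPInt_prod hp fun i _ => pint_sub hp hv (isPInt_e hp i))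

lemma isPInt_HH (hp : p.Prime) (hodd : Odd p) {u v : ℚ} (hu : IsPInt p u) (hv : IsPInt p v) :
    IsPInt p (HH p u v) :=
  isPInt_sum hp fun k hk => pint_mul hp (isPInt_cc hp hodd (Finset.mem_range.1 hk))
    (isPInt_hh hp hu hv k)

lemma isPInt_KK (hp : p.Prime) (hodd : Odd p) {u w v : ℚ}
    (hu : IsPInt p u) (hw : IsPInt p w) (hv : IsPInt p v) :
    IsPInt p (KK p u w v) :=
  isPInt_sum hp fun k hk => pint_mul hp (isPInt_cc hp hodd (Finset.mem_range.1 hk))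
    (isPInt_sum hp fun j _ => pint_mul hp (isPInt_hh hp hu hw j)
      (isPInt_prod hp fun i _ => pint_sub hp hv (isPInt_e hp i)))

end Aux3

open Aux Aux2 Aux3 in
theorem sum_div_four_pow_cong (p : ℕ) (hp : p.Prime) (hodd : Odd p)
    (a : ℚ) (ha : IsPInt p a) (r : ℕ) (hr : r < p) (har : ModCong p 1 a r)
    (hrodd : Odd r) :
    ModCong p 2
      (∑ k ∈ Finset.range p,
        ((2 * k).choose k : ℚ) * gchoose a k * gchoose (-1 - a) k / 4 ^ k) 0 := by
  obtain ⟨z, hz, haz⟩ := har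
  have hzint : IsPInt p z := hz
  -- rewrite the sum as Phi p (a(a+1))
  have hS : (∑ k ∈ Finset.range p,
      ((2 * k).choose k : ℚ) * gchoose a k * gchoose (-1 - a) k / 4 ^ k)
      = Phi p (a*(a+1)) := by
    unfold Phi
    exact Finset.sum_congr rfl fun k _ => term_eq a k
  -- vanishing at e r
  have h1 : Phi p (e r) = 0 := by
    rw [Phi_e p r hr]; exact uu_odd r hrodd
  -- the first linear factor
  have hxx1 : a*(a+1) - e r = (p:ℚ) * (z*(a+(r:ℚ)+1)) := by
    unfold e
    linear_combination (a+(r:ℚ)+1) * haz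
  have hphi1 : Phi p (a*(a+1)) = (a*(a+1) - e r) * HH p (a*(a+1)) (e r) := by
    have h := Phi_sub p (a*(a+1)) (e r)
    rw [h1, sub_zero] at h
    exact h
  have hxint : IsPInt p (a*(a+1)) :=
    pint_mul hp ha (pint_add hp ha (isPInt_one hp))
  have hzar : IsPInt p (z*(a+(r:ℚ)+1)) :=
    pint_mul hp hzint (pint_add hp (pint_add hp ha (isPInt_natCast hp r)) (isPInt_one hp))
  by_cases h2r : 2*r + 1 = p
  · -- central case: a(a+1) - e r is divisible by p²
    have hpc : (p:ℚ) = 2*(r:ℚ)+1 := by exact_mod_cast (congrArg (Nat.cast : ℕ → ℚ) h2r).symm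
    have ha' : a = (r:ℚ) + (p:ℚ)*z := by linear_combination haz
    have hx1p : a*(a+1) - e r = (p:ℚ)^2 * (z*(z+1)) := by
      unfold e
      rw [ha', hpc]
      ring
    refine ⟨z*(z+1) * HH p (a*(a+1)) (e r), ?_, ?_⟩
    · exact pint_mul hp (pint_mul hp hzint (pint_add hp hzint (isPInt_one hp)))
        (isPInt_HH hp hodd hxint (isPInt_e hp r))
    · rw [sub_zero, hS, hphi1, hx1p]
      ring
  · -- generic case: two distinct roots
    set r' : ℕ := p - (r+1) with hr'def
    obtain ⟨c, hc⟩ := id hodd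
    obtain ⟨d, hd⟩ := id hrodd
    have hr'odd : Odd r' := ⟨c-d-1, by omega⟩
    have hr'lt : r' < p := by omega
    have hr'cast : ((r':ℕ):ℚ) = (p:ℚ) - (r:ℚ) - 1 := by
      have h1 : r + 1 ≤ p := hr
      push_cast [hr'def, Nat.cast_sub h1]
      ring
    have h2 : Phi p (e r') = 0 := by
      rw [Phi_e p r' hr'lt]; exact uu_odd r' hr'odd
    have hxx2 : a*(a+1) - e r' = (p:ℚ) * (z*(a+(r:ℚ)+1) + (2*(r:ℚ)+1) - (p:ℚ)) := by
      unfold e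
      rw [hr'cast]
      linear_combination (a+(r:ℚ)+1) * haz
    have hee : e r - e r' = (p:ℚ) * ((2*(r:ℚ)+1) - (p:ℚ)) := by
      linear_combination hxx2 - hxx1
    have heene : e r' - e r ≠ 0 := by
      rw [show e r' - e r = -(e r - e r') by ring, hee]
      have hp0 : (p:ℚ) ≠ 0 := by
        exact_mod_cast hp.pos.ne'
      have h2r' : (2*(r:ℚ)+1) - (p:ℚ) ≠ 0 := by
        intro h
        apply h2r
        have : (2*(r:ℚ)+1) = (p:ℚ) := by linarith
        exact_mod_cast this
      intro h
      apply h2r'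
      have := neg_eq_zero.1 h
      rcases mul_eq_zero.1 this with h' | h'
      · exact absurd h' hp0
      · exact h'
    have hH0 : HH p (e r') (e r) = 0 := by
      have h := Phi_sub p (e r') (e r)
      rw [h1, h2, sub_zero] at h
      rcases mul_eq_zero.1 h.symm with h' | h'
      · exact absurd h' heene
      · exact h'
    have hHK : HH p (a*(a+1)) (e r)
        = (a*(a+1) - e r') * KK p (a*(a+1)) (e r') (e r) := by
      have h := HH_sub p (a*(a+1)) (e r') (e r)
      rw [hH0, sub_zero] at h
      exact h
    refine ⟨(z*(a+(r:ℚ)+1)) * ((z*(a+(r:ℚ)+1) + (2*(r:ℚ)+1) - (p:ℚ)))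
        * KK p (a*(a+1)) (e r') (e r), ?_, ?_⟩
    · refine pint_mul hp (pint_mul hp hzar ?_) ?_
      · exact pint_sub hp (pint_add hp hzar
          (pint_add hp (pint_mul hp (isPInt_natCast hp 2) (isPInt_natCast hp r)) (isPInt_one hp)))
          (isPInt_natCast hp p)
      · exact isPInt_KK hp hodd hxint (isPInt_e hp r') (isPInt_e hp r)
    · rw [sub_zero, hS, hphi1, hHK, hxx1, hxx2]
      ring
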